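/- Let G be a group and H a subgroup of finite index in G. Suppose H has a surjective monoid homomorphism μ : Δ* → H from a free monoid over a finite alphabet with μ⁻¹(1) context-free, and let σ : Σ* → G be any surjective monoid homomorphism from a free monoid over a finite alphabet. Then σ⁻¹(1) is context-free. -/

import Mathlib

namespace CFWP

variable {α Δ Q : Type}

/-- Transducer configurations: a state plus an output buffer still to be matched. -/
abbrev Conf (Δ Q : Type) := Q × List Δ

section paths
variable (δ : Q → α → Q) (out : Q → α → List Δ)

/-- A path of the buffer machine: from a configuration, we may *emit* an input letter `a`
(only when the buffer is empty), loading the buffer with `out c a`, or *consume* the head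
of the buffer, matching it against the next letter of the `Δ`-word `v`.
`TPath p v u p'` : starting at `p`, consuming the `Δ`-word `v` and emitting the `α`-word `u`,
we can reach `p'`. -/
inductive TPath : Conf Δ Q → List Δ → List α → Conf Δ Q → Prop
  | nil (p : Conf Δ Q) : TPath p [] [] p
  | emit (c : Q) (a : α) {v : List Δ} {u : List α} {p' : Conf Δ Q}
      (h : TPath (δ c a, out c a) v u p') : TPath (c, []) v (a :: u) p'
  | consume (c : Q) (d : Δ) (b : List Δ) {v : List Δ} {u : List α} {p' : Conf Δ Q}
      (h : TPath (c, b) v u p') : TPath (c, d :: b) (d :: v) u p'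

/-- Normalized paths: as `TPath`, but an emission is only allowed if some `Δ`-letter is
still going to be consumed afterwards; hence the path ends right after its last consumption. -/
inductive NPath : Conf Δ Q → List Δ → List α → Conf Δ Q → Prop
  | nil (p : Conf Δ Q) : NPath p [] [] p
  | emit (c : Q) (a : α) {v : List Δ} {u : List α} {p' : Conf Δ Q} (hv : v ≠ [])
      (h : NPath (δ c a, out c a) v u p') : NPath (c, []) v (a :: u) p'
  | consume (c : Q) (d : Δ) (b : List Δ) {v : List Δ} {u : List α} {p' : Conf Δ Q}
      (h : NPath (c, b) v u p') : NPath (c, d :: b) (d :: v) u p'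

variable {δ : Q → α → Q} {out : Q → α → List Δ}

lemma NPath.toTPath {p p' : Conf Δ Q} {v : List Δ} {u : List α} (h : NPath δ out p v u p') :
    TPath δ out p v u p' := by
  induction h with
  | nil => exact TPath.nil _
  | emit c a hv h ih => exact TPath.emit c a ih
  | consume c d b h ih => exact TPath.consume c d b ih

lemma TPath.append {p q p' : Conf Δ Q} {v v' : List Δ} {u u' : List α}
    (h : TPath δ out p v u q) (h' : TPath δ out q v' u' p') :
    TPath δ out p (v ++ v') (u ++ u') p' := by
  induction h with
  | nil => simpa using h'
  | emit c a hp ih => exact TPath.emit c a (ih h')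
  | consume c d b hp ih => exact TPath.consume c d b (ih h')

lemma NPath.append {p q p' : Conf Δ Q} {v v' : List Δ} {u u' : List α}
    (h : NPath δ out p v u q) (h' : NPath δ out q v' u' p') :
    NPath δ out p (v ++ v') (u ++ u') p' := by
  induction h with
  | nil => simpa using h'
  | emit c a hv hp ih => exact NPath.emit c a (by simp [hv]) (ih h')
  | consume c d b hp ih => exact NPath.consume c d b (ih h')

lemma NPath.nil_inv {p p' : Conf Δ Q} {u : List α} (h : NPath δ out p [] u p') :
    u = [] ∧ p' = p := by
  cases h with
  | nil => exact ⟨rfl, rfl⟩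
  | emit c a hv h => exact absurd rfl hv

/-- Split a path at its last consumption. -/
lemma TPath.split_last {p p' : Conf Δ Q} {v : List Δ} {u : List α}
    (h : TPath δ out p v u p') :
    ∃ q u₁ u₂, u = u₁ ++ u₂ ∧ NPath δ out p v u₁ q ∧ TPath δ out q [] u₂ p' := by
  induction h with
  | nil => exact ⟨_, [], [], rfl, NPath.nil _, TPath.nil _⟩
  | emit c a h ih =>
    obtain ⟨q, u₁, u₂, rfl, h₁, h₂⟩ := ih
    rcases eq_or_ne ‹List Δ› [] with rfl | hv
    · obtain ⟨rfl, rfl⟩ := h₁.nil_inv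
      exact ⟨(c, []), [], _, rfl, NPath.nil _, TPath.emit c a (h₂ : TPath δ out _ [] _ _)⟩
    · exact ⟨q, a :: u₁, u₂, rfl, NPath.emit c a hv h₁, h₂⟩
  | consume c d b h ih =>
    obtain ⟨q, u₁, u₂, rfl, h₁, h₂⟩ := ih
    exact ⟨q, u₁, u₂, rfl, NPath.consume c d b h₁, h₂⟩

/-- Split a normalized path along a decomposition of the consumed word. -/
lemma NPath.split {p p' : Conf Δ Q} {v₁ v₂ : List Δ} {u : List α}
    (h : NPath δ out p (v₁ ++ v₂) u p') :
    ∃ q u₁ u₂, u = u₁ ++ u₂ ∧ NPath δ out p v₁ u₁ q ∧ NPath δ out q v₂ u₂ p' := by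
  suffices H : ∀ p w u p'', NPath δ out p w u p'' → ∀ v₁ v₂ : List Δ, w = v₁ ++ v₂ →
      ∃ q u₁ u₂, u = u₁ ++ u₂ ∧ NPath δ out p v₁ u₁ q ∧ NPath δ out q v₂ u₂ p'' from
    H _ _ _ _ h v₁ v₂ rfl
  intro p w u p'' h
  induction h with
  | nil q =>
    intro v₁ v₂ hv
    obtain ⟨rfl, rfl⟩ := List.append_eq_nil_iff.mp hv.symm
    exact ⟨q, [], [], rfl, NPath.nil _, NPath.nil _⟩
  | emit c a hv hp ih =>
    intro v₁ v₂ heq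
    cases v₁ with
    | nil =>
      subst heq
      exact ⟨(c, []), [], _, rfl, NPath.nil _, NPath.emit c a hv hp⟩
    | cons d v₁ =>
      subst heq
      obtain ⟨q, u₁, u₂, rfl, h₁, h₂⟩ := ih (d :: v₁) v₂ rfl
      exact ⟨q, a :: u₁, u₂, rfl, NPath.emit c a (by simp) h₁, h₂⟩
  | consume c d b hp ih =>
    intro v₁ v₂ heq
    cases v₁ with
    | nil =>
      subst heq
      exact ⟨(c, d :: b), [], _, rfl, NPath.nil _, NPath.consume c d b hp⟩
    | cons d' v₁ =>
      injection heq with h1 h2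
      subst h1; subst h2
      obtain ⟨q, u₁, u₂, rfl, h₁, h₂⟩ := ih v₁ v₂ rfl
      exact ⟨q, u₁, u₂, rfl, NPath.consume c d b h₁, h₂⟩

/-- Invert a normalized path on `d :: v`: a pure-emission path, one consumption, the rest. -/
lemma NPath.cons_inv {p p' : Conf Δ Q} {d : Δ} {v : List Δ} {u : List α}
    (h : NPath δ out p (d :: v) u p') :
    ∃ c b u₁ u₂, u = u₁ ++ u₂ ∧ TPath δ out p [] u₁ (c, d :: b) ∧
      NPath δ out (c, b) v u₂ p' := by
  suffices H : ∀ p w u p'', NPath δ out p w u p'' → ∀ d v, w = d :: v →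
      ∃ c b u₁ u₂, u = u₁ ++ u₂ ∧ TPath δ out p [] u₁ (c, d :: b) ∧
        NPath δ out (c, b) v u₂ p'' from H _ _ _ _ h d v rfl
  intro p w u p'' h
  induction h with
  | nil => intro d v hv; simp at hv
  | emit c a hv hp ih =>
    intro d v heq
    obtain ⟨c', b, u₁, u₂, rfl, h₁, h₂⟩ := ih d v heq
    exact ⟨c', b, a :: u₁, u₂, rfl, TPath.emit c a h₁, h₂⟩
  | consume c d' b hp ih =>
    intro d v heq
    injection heq with h1 h2
    subst h1; subst h2
    exact ⟨c, b, [], _, rfl, TPath.nil _, hp⟩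

/-- Prepend a pure-emission path to a normalized path consuming a nonempty word. -/
lemma TPath.trans_nPath {p q p' : Conf Δ Q} {v : List Δ} {u u' : List α}
    (h : TPath δ out p [] u q) (h' : NPath δ out q v u' p') (hv : v ≠ []) :
    NPath δ out p v (u ++ u') p' := by
  suffices H : ∀ p w u q, TPath δ out p w u q → w = [] →
      NPath δ out q v u' p' → NPath δ out p v (u ++ u') p' from H _ _ _ _ h rfl h'
  intro p w u q h
  induction h with
  | nil => intro _ h'; simpa using h'
  | emit c a hp ih => intro hw h'; exact NPath.emit c a hv (ih hw h')
  | consume c d b hp ih => intro hw; simp at hw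

end paths

section runs
variable (δ : Q → α → Q) (out : Q → α → List Δ)

/-- The state reached from `c` after reading `u`. -/
def runFrom (c : Q) (u : List α) : Q := u.foldl δ c

/-- The output produced from state `c` while reading `u`. -/
def outFrom : Q → List α → List Δ
  | _, [] => []
  | c, a :: u => out c a ++ outFrom (δ c a) u

variable {δ : Q → α → Q} {out : Q → α → List Δ}

@[simp] lemma runFrom_nil (c : Q) : runFrom δ c [] = c := rfl
@[simp] lemma runFrom_cons (c : Q) (a : α) (u : List α) :
    runFrom δ c (a :: u) = runFrom δ (δ c a) u := rfl
@[simp] lemma outFrom_nil (c : Q) : outFrom δ out c [] = [] := rfl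
@[simp] lemma outFrom_cons (c : Q) (a : α) (u : List α) :
    outFrom δ out c (a :: u) = out c a ++ outFrom δ out (δ c a) u := rfl

lemma TPath.buffer_prepend {p p' : Conf Δ Q} {v : List Δ} {u : List α}
    (h : TPath δ out p v u p') (w : List Δ) :
    TPath δ out (p.1, w ++ p.2) (w ++ v) u p' := by
  induction w with
  | nil => simpa using h
  | cons d w ih => exact TPath.consume _ d _ ih

lemma tPath_of_run (c : Q) (u : List α) :
    TPath δ out (c, []) (outFrom δ out c u) u (runFrom δ c u, []) := by
  induction u generalizing c with
  | nil => exact TPath.nil _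
  | cons a u ih =>
    refine TPath.emit c a ?_
    simpa using (ih (δ c a)).buffer_prepend (out c a)

lemma TPath.run_eq {p p' : Conf Δ Q} {v : List Δ} {u : List α}
    (h : TPath δ out p v u p') :
    p.2 ++ outFrom δ out p.1 u = v ++ p'.2 ∧ runFrom δ p.1 u = p'.1 := by
  induction h with
  | nil => simp
  | emit c a hp ih => simpa using ih
  | consume c d b hp ih => simpa using ih

/-- Characterization of buffer-free paths. -/
lemma tPath_iff_run {c c' : Q} {v : List Δ} {u : List α} :
    TPath δ out (c, []) v u (c', []) ↔ outFrom δ out c u = v ∧ runFrom δ c u = c' := by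
  constructor
  · intro h
    have := h.run_eq
    simpa using this
  · rintro ⟨rfl, rfl⟩
    exact tPath_of_run c u

/-- Configurations whose buffer is a suffix of some output word (or empty). -/
def Good (p : Conf Δ Q) : Prop := p.2 = [] ∨ ∃ c a, p.2 <:+ out c a

lemma good_nil (c : Q) : Good (out := out) (c, []) := Or.inl rfl

lemma Good.tail {c : Q} {d : Δ} {b : List Δ} (h : Good (out := out) (c, d :: b)) (c' : Q) :
    Good (out := out) (c', b) := by
  rcases h with h | ⟨c₁, a, h⟩
  · simp at h
  · exact Or.inr ⟨c₁, a, (List.suffix_cons d b).trans h⟩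

lemma TPath.good {p p' : Conf Δ Q} {v : List Δ} {u : List α}
    (h : TPath δ out p v u p') (hp : Good (out := out) p) : Good (out := out) p' := by
  induction h with
  | nil => exact hp
  | emit c a hp' ih => exact ih (Or.inr ⟨c, a, List.suffix_refl _⟩)
  | consume c d b hp' ih => exact ih (hp.tail c)

lemma NPath.good {p p' : Conf Δ Q} {v : List Δ} {u : List α}
    (h : NPath δ out p v u p') (hp : Good (out := out) p) : Good (out := out) p' :=
  h.toTPath.good hp

end runs

noncomputable section grammar
variable [Fintype α] [Fintype Q]
variable (g : ContextFreeGrammar.{0} Δ) (δ : Q → α → Q) (out : Q → α → List Δ) (q₀ : Q)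

/-- Nonterminals of the simulating grammar: a fresh start symbol (`none`), and triples
consisting of a source configuration, a symbol of `g` (or a fresh `ε`-marker), and a
target configuration. -/
abbrev NT' : Type := Option (Conf Δ Q × (Symbol Δ g.NT ⊕ Unit) × Conf Δ Q)

/-- The initial (and final) configuration. -/
abbrev iniC : Conf Δ Q := (q₀, [])

/-- A list enumerating all good configurations. -/
def PL : List (Conf Δ Q) :=
  (Finset.univ : Finset Q).toList.flatMap fun c =>
    ([] :: ((Finset.univ : Finset Q).toList.flatMap fun c' =>
      (Finset.univ : Finset α).toList.flatMap fun a => (out c' a).tails)).map fun b => (c, b)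

lemma mem_PL {p : Conf Δ Q} : p ∈ PL (α := α) out ↔ Good (out := out) p := by
  obtain ⟨c, b⟩ := p
  simp only [PL, List.mem_flatMap, List.mem_map, List.mem_cons, Prod.mk.injEq, Good]
  constructor
  · rintro ⟨c', hc', b', hb', rfl, rfl⟩
    rcases hb' with rfl | hb'
    · exact Or.inl rfl
    · simp only [List.mem_flatMap, List.mem_tails] at hb'
      obtain ⟨c₁, -, a, -, hb'⟩ := hb'
      exact Or.inr ⟨c₁, a, hb'⟩
  · intro h
    refine ⟨c, by simp, b, ?_, rfl, rfl⟩
    rcases h with rfl | ⟨c₁, a, hb⟩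
    · exact Or.inl rfl
    · refine Or.inr ?_
      simp only [List.mem_flatMap, List.mem_tails]
      exact ⟨c₁, by simp, a, by simp, hb⟩

/-- All sequences of good configurations of a given length. -/
def seqs (n : ℕ) : List (List (Conf Δ Q)) :=
  Nat.rec [[]] (fun _ ih => (PL (α := α) out).flatMap fun p => ih.map (p :: ·)) n

@[simp] lemma seqs_zero : seqs (α := α) out 0 = [[]] := rfl
@[simp] lemma seqs_succ (n : ℕ) :
    seqs (α := α) out (n + 1) = (PL (α := α) out).flatMap fun p => (seqs out n).map (p :: ·) := rfl

lemma mem_seqs {n : ℕ} {rs : List (Conf Δ Q)} :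
    rs ∈ seqs (α := α) out n ↔ rs.length = n ∧ ∀ r ∈ rs, Good (out := out) r := by
  induction n generalizing rs with
  | zero =>
    simp only [seqs_zero, List.mem_singleton]
    constructor
    · rintro rfl; simp
    · rintro ⟨h, -⟩; exact List.length_eq_zero_iff.mp h
  | succ n ih =>
    simp only [seqs_succ, List.mem_flatMap, List.mem_map]
    constructor
    · rintro ⟨p, hp, rs', hrs', rfl⟩
      obtain ⟨hl, hg⟩ := ih.mp hrs'
      refine ⟨by simp [hl], ?_⟩
      intro r hr
      rcases List.mem_cons.mp hr with rfl | hr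
      · exact (mem_PL out).mp hp
      · exact hg r hr
    · rintro ⟨hl, hg⟩
      cases rs with
      | nil => simp at hl
      | cons p rs' =>
        exact ⟨p, (mem_PL out).mpr (hg p (by simp)),
          rs', ih.mpr ⟨by simpa using hl, fun r hr => hg r (by simp [hr])⟩, rfl⟩

/-- The lift of a sentential form of `g` to a chain of triple nonterminals. -/
def zipLift : Conf Δ Q → List (Symbol Δ g.NT) → List (Conf Δ Q) → List (Symbol α (NT' (Q := Q) g))
  | q, s :: rest, r :: rs => Symbol.nonterminal (some (q, Sum.inl s, r)) :: zipLift r rest rs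
  | _, _, _ => []

/-- The last configuration of a chain. -/
def lastP (q : Conf Δ Q) (rs : List (Conf Δ Q)) : Conf Δ Q := rs.getLastD q

@[simp] lemma lastP_nil (q : Conf Δ Q) : lastP q [] = q := rfl
@[simp] lemma lastP_cons (q r : Conf Δ Q) (rs : List (Conf Δ Q)) :
    lastP q (r :: rs) = lastP r rs := List.getLastD_cons

/-- The start rules. -/
def rulesZ : List (ContextFreeRule α (NT' (Q := Q) g)) :=
  (PL (α := α) out).map fun q =>
    ⟨none, [Symbol.nonterminal (some (iniC q₀, Sum.inl (Symbol.nonterminal g.initial), q)),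
            Symbol.nonterminal (some (q, Sum.inr (), iniC q₀))]⟩

/-- The rules simulating rules of `g`. -/
def rulesA : List (ContextFreeRule α (NT' (Q := Q) g)) :=
  g.rules.toList.flatMap fun r => (PL (α := α) out).flatMap fun q =>
    (seqs (α := α) out r.output.length).map fun rs =>
      ⟨some (q, Sum.inl (Symbol.nonterminal r.input), lastP q rs), zipLift g q r.output rs⟩

/-- Auxiliary maker for terminal rules. -/
def mkT (p p' : Conf Δ Q) : List (ContextFreeRule α (NT' (Q := Q) g)) :=
  match p' with
  | (_, []) => []
  | (c, d :: b) => [⟨some (p, Sum.inl (Symbol.terminal d), (c, b)),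
      [Symbol.nonterminal (some (p, Sum.inr (), (c, d :: b)))]⟩]

/-- The rules simulating consumption of one `Δ`-terminal. -/
def rulesT : List (ContextFreeRule α (NT' (Q := Q) g)) :=
  (PL (α := α) out).flatMap fun p => (PL (α := α) out).flatMap fun p' => mkT g p p'

/-- The rules for pure-emission segments. -/
def rulesE : List (ContextFreeRule α (NT' (Q := Q) g)) :=
  ((PL (α := α) out).map fun p => ⟨some (p, Sum.inr (), p), []⟩) ++
  ((Finset.univ : Finset Q).toList.flatMap fun c =>
    (Finset.univ : Finset α).toList.flatMap fun a =>
      (PL (α := α) out).map fun q =>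
        ⟨some ((c, []), Sum.inr (), q),
         [Symbol.terminal a, Symbol.nonterminal (some ((δ c a, out c a), Sum.inr (), q))]⟩)

/-- The simulating grammar. -/
def bigGrammar : ContextFreeGrammar α :=
  letI := Classical.decEq (ContextFreeRule α (NT' (Q := Q) g))
  ⟨NT' (Q := Q) g, none,
    (rulesZ g out q₀ ++ rulesA g out ++ rulesT g out ++ rulesE g δ out).toFinset⟩

lemma mem_bigGrammar_rules {r : ContextFreeRule α (NT' (Q := Q) g)} :
    r ∈ (bigGrammar g δ out q₀).rules ↔
      r ∈ rulesZ g out q₀ ∨ r ∈ rulesA g out ∨ r ∈ rulesT g out ∨ r ∈ rulesE g δ out := by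
  letI := Classical.decEq (ContextFreeRule α (NT' (Q := Q) g))
  show r ∈ (rulesZ g out q₀ ++ rulesA g out ++ rulesT g out ++ rulesE g δ out).toFinset ↔ _
  rw [List.mem_toFinset]
  simp [List.mem_append, or_assoc]


/-- The intended meaning of each nonterminal of the simulating grammar. -/
def Den : NT' (Q := Q) g → List α → Prop
  | none, u => ∃ v, v ∈ g.language ∧ TPath δ out (iniC q₀) v u (iniC q₀)
  | some (p, Sum.inl (Symbol.terminal d), p'), u => NPath δ out p [d] u p'
  | some (p, Sum.inl (Symbol.nonterminal A), p'), u =>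
      ∃ v, g.Derives [Symbol.nonterminal A] (v.map Symbol.terminal) ∧ NPath δ out p v u p'
  | some (p, Sum.inr _, p'), u => TPath δ out p [] u p'

/-- The meaning of a sentential form of the simulating grammar. -/
inductive SDen : List (Symbol α (NT' (Q := Q) g)) → List α → Prop
  | nil : SDen [] []
  | term {f : List (Symbol α (NT' (Q := Q) g))} {u : List α} (a : α) (h : SDen f u) :
      SDen (Symbol.terminal a :: f) (a :: u)
  | nt {f : List (Symbol α (NT' (Q := Q) g))} {u₁ u₂ : List α} (n : NT' (Q := Q) g)
      (hn : Den g δ out q₀ n u₁) (h : SDen f u₂) :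
      SDen (Symbol.nonterminal n :: f) (u₁ ++ u₂)

variable {g : ContextFreeGrammar.{0} Δ} {δ : Q → α → Q} {out : Q → α → List Δ} {q₀ : Q}

lemma sDen_map_term (u : List α) : SDen g δ out q₀ (u.map Symbol.terminal) u := by
  induction u with
  | nil => exact SDen.nil
  | cons a u ih => exact SDen.term a ih

lemma SDen.append {f₁ f₂ : List (Symbol α (NT' (Q := Q) g))} {u₁ u₂ : List α}
    (h₁ : SDen g δ out q₀ f₁ u₁) (h₂ : SDen g δ out q₀ f₂ u₂) :
    SDen g δ out q₀ (f₁ ++ f₂) (u₁ ++ u₂) := by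
  induction h₁ with
  | nil => simpa using h₂
  | term a h ih => exact SDen.term a ih
  | nt n hn h ih => simpa using SDen.nt n hn ih

lemma SDen.split {f₁ f₂ : List (Symbol α (NT' (Q := Q) g))} {u : List α}
    (h : SDen g δ out q₀ (f₁ ++ f₂) u) :
    ∃ u₁ u₂, u = u₁ ++ u₂ ∧ SDen g δ out q₀ f₁ u₁ ∧ SDen g δ out q₀ f₂ u₂ := by
  induction f₁ generalizing u with
  | nil => exact ⟨[], u, rfl, SDen.nil, h⟩
  | cons s f₁ ih =>
    cases h with
    | term a h =>
      obtain ⟨u₁, u₂, rfl, h₁, h₂⟩ := ih h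
      exact ⟨a :: u₁, u₂, rfl, SDen.term a h₁, h₂⟩
    | nt n hn h =>
      obtain ⟨u₁, u₂, rfl, h₁, h₂⟩ := ih h
      exact ⟨_ ++ u₁, u₂, by simp, SDen.nt n hn h₁, h₂⟩

lemma sDen_term_inv {u u' : List α} (h : SDen g δ out q₀ (u'.map Symbol.terminal) u) :
    u = u' := by
  induction u' generalizing u with
  | nil => cases h; rfl
  | cons a u' ih => cases h with | term a h => exact congrArg (a :: ·) (ih h)

lemma sDen_nt_inv {n : NT' (Q := Q) g} {u : List α}
    (h : SDen g δ out q₀ [Symbol.nonterminal n] u) : Den g δ out q₀ n u := by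
  cases h with
  | nt n hn h => cases h; simpa using hn

/-- Soundness of the rules simulating a rule of `g`: a meaning-respecting interpretation
of the lifted right-hand side yields a derivation of `g` together with a normalized path. -/
lemma sDen_zipLift {β : List (Symbol Δ g.NT)} {rs : List (Conf Δ Q)} {q : Conf Δ Q}
    {u : List α} (hl : rs.length = β.length)
    (h : SDen g δ out q₀ (zipLift (Q := Q) g q β rs) u) :
    ∃ v, g.Derives β (v.map Symbol.terminal) ∧ NPath δ out q v u (lastP q rs) := by
  induction β generalizing q rs u with
  | nil =>
    obtain rfl := List.length_eq_zero_iff.mp hl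
    cases h
    exact ⟨[], by simpa using ContextFreeGrammar.Derives.refl ([] : List (Symbol Δ g.NT)),
      NPath.nil _⟩
  | cons s β ih =>
    cases rs with
    | nil => simp at hl
    | cons r rs =>
      rw [show zipLift (Q := Q) g q (s :: β) (r :: rs) =
        Symbol.nonterminal (some (q, Sum.inl s, r)) :: zipLift (Q := Q) g r β rs from rfl,
        show (Symbol.nonterminal (some (q, Sum.inl s, r)) :: zipLift (Q := Q) g r β rs : List _) =
        [Symbol.nonterminal (some (q, Sum.inl s, r))] ++ zipLift (Q := Q) g r β rs by simp] at h
      obtain ⟨u₁, u₂, rfl, h₁, h₂⟩ := h.split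
      obtain ⟨v₂, hd₂, hp₂⟩ := ih (by simpa using hl) h₂
      have h₁' := sDen_nt_inv h₁
      have : ∃ v₁, g.Derives [s] (v₁.map Symbol.terminal) ∧ NPath δ out q v₁ u₁ r := by
        cases s with
        | terminal d => exact ⟨[d], by simpa using ContextFreeGrammar.Derives.refl [Symbol.terminal d], h₁'⟩
        | nonterminal A => exact h₁'
      obtain ⟨v₁, hd₁, hp₁⟩ := this
      refine ⟨v₁ ++ v₂, ?_, by simpa using hp₁.append hp₂⟩
      have step1 := hd₁.append_right β
      have step2 := hd₂.append_left (v₁.map Symbol.terminal)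
      simpa using step1.trans step2

lemma rule_sound {r : ContextFreeRule α (NT' (Q := Q) g)}
    (hr : r ∈ (bigGrammar g δ out q₀).rules) {u : List α}
    (h : SDen g δ out q₀ r.output u) : Den g δ out q₀ r.input u := by
  rcases (mem_bigGrammar_rules g δ out q₀).mp hr with hz | ha | ht | he
  · -- start rules
    obtain ⟨q, hq, rfl⟩ := List.mem_map.mp hz
    rw [show ([Symbol.nonterminal (some (iniC q₀, Sum.inl (Symbol.nonterminal g.initial), q)),
          Symbol.nonterminal (some (q, Sum.inr (), iniC q₀))] :
        List (Symbol α (NT' (Q := Q) g))) =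
      [Symbol.nonterminal (some (iniC q₀, Sum.inl (Symbol.nonterminal g.initial), q))] ++
      [Symbol.nonterminal (some (q, Sum.inr (), iniC q₀))] by simp] at h
    obtain ⟨u₁, u₂, rfl, h₁, h₂⟩ := h.split
    obtain ⟨v, hd, hp⟩ := sDen_nt_inv h₁
    have h₂' : TPath δ out q [] u₂ (iniC q₀) := sDen_nt_inv h₂
    exact ⟨v, (g.mem_language_iff v).mpr hd, by simpa using hp.toTPath.append h₂'⟩
  · -- rules simulating rules of `g`
    obtain ⟨r₀, hr₀, hrest⟩ := List.mem_flatMap.mp ha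
    obtain ⟨q, hq, hrest⟩ := List.mem_flatMap.mp hrest
    obtain ⟨rs, hrs, rfl⟩ := List.mem_map.mp hrest
    obtain ⟨v, hd, hp⟩ := sDen_zipLift ((mem_seqs out).mp hrs).1 h
    exact ⟨v, (ContextFreeGrammar.Produces.trans_derives
      ⟨r₀, Finset.mem_toList.mp hr₀, ContextFreeRule.Rewrites.input_output⟩ hd), hp⟩
  · -- terminal rules
    obtain ⟨p, hp, hrest⟩ := List.mem_flatMap.mp ht
    obtain ⟨p', hp', hmk⟩ := List.mem_flatMap.mp hrest
    obtain ⟨c, b⟩ := p'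
    cases b with
    | nil => simp [mkT] at hmk
    | cons d b =>
      simp only [mkT, List.mem_singleton] at hmk
      subst hmk
      have h' : TPath δ out p [] u (c, d :: b) := sDen_nt_inv h
      have : NPath δ out p [d] (u ++ []) (c, b) :=
        h'.trans_nPath (NPath.consume c d b (NPath.nil (c, b))) (by simp)
      show NPath δ out p [d] u (c, b)
      simpa using this
  · -- `ε`-rules
    rcases List.mem_append.mp he with he | he
    · obtain ⟨p, hp, rfl⟩ := List.mem_map.mp he
      cases h
      exact TPath.nil p
    · obtain ⟨c, hc, hrest⟩ := List.mem_flatMap.mp he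
      obtain ⟨a, ha, hrest⟩ := List.mem_flatMap.mp hrest
      obtain ⟨q, hq, rfl⟩ := List.mem_map.mp hrest
      cases h with
      | term a h =>
        have h' : TPath δ out (δ c a, out c a) [] _ q := sDen_nt_inv h
        exact TPath.emit c a h'

lemma produces_sound {f f' : List (Symbol α (NT' (Q := Q) g))} {u : List α}
    (hp : (bigGrammar g δ out q₀).Produces f f') (h : SDen g δ out q₀ f' u) :
    SDen g δ out q₀ f u := by
  obtain ⟨r, hr, hrw⟩ := hp
  obtain ⟨x, y, rfl, rfl⟩ := hrw.exists_parts
  rw [List.append_assoc] at h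
  obtain ⟨u₁, u₂₃, rfl, hx, h₂₃⟩ := h.split
  obtain ⟨u₂, u₃, rfl, hmid, hy⟩ := h₂₃.split
  have hden : Den g δ out q₀ r.input u₂ := rule_sound hr hmid
  have : SDen g δ out q₀ ([Symbol.nonterminal r.input] ++ y) (u₂ ++ u₃) :=
    SDen.append (by
      have h0 := SDen.nt (g := g) (δ := δ) (out := out) (q₀ := q₀) r.input hden SDen.nil
      rw [List.append_nil] at h0
      exact h0) hy
  rw [List.append_assoc]
  exact SDen.append hx this

lemma derives_sound {f f' : List (Symbol α (NT' (Q := Q) g))} {u : List α}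
    (hd : (bigGrammar g δ out q₀).Derives f f') (h : SDen g δ out q₀ f' u) :
    SDen g δ out q₀ f u := by
  induction hd with
  | refl => exact h
  | tail _ hlast ih => exact ih (produces_sound hlast h)

lemma bigGrammar_sound {u : List α} (h : u ∈ (bigGrammar g δ out q₀).language) :
    ∃ v, v ∈ g.language ∧ TPath δ out (iniC q₀) v u (iniC q₀) := by
  have := derives_sound ((bigGrammar g δ out q₀).mem_language_iff u |>.mp h)
    (sDen_map_term u)
  exact sDen_nt_inv this

lemma derives_E {p q : Conf Δ Q} {u : List α} (h : TPath δ out p [] u q)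
    (hq : Good (out := out) q) :
    (bigGrammar g δ out q₀).Derives
      [Symbol.nonterminal (some (p, Sum.inr (), q))] (u.map Symbol.terminal) := by
  suffices H : ∀ p w u q', TPath δ out p w u q' → w = [] → Good (out := out) q' →
      (bigGrammar g δ out q₀).Derives
        [Symbol.nonterminal (some (p, Sum.inr (), q'))] (u.map Symbol.terminal) from
    H _ _ _ _ h rfl hq
  intro p w u q' h
  induction h with
  | nil p =>
    intro _ hq'
    refine ContextFreeGrammar.Produces.single
      ⟨⟨some (p, Sum.inr (), p), []⟩, ?_, by simpa using ContextFreeRule.Rewrites.input_output⟩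
    refine (mem_bigGrammar_rules g δ out q₀).mpr (Or.inr (Or.inr (Or.inr ?_)))
    exact List.mem_append.mpr (Or.inl (List.mem_map.mpr ⟨p, (mem_PL out).mpr hq', rfl⟩))
  | emit c a hp ih =>
    rename_i v' u' q''
    intro hw hq'
    refine ContextFreeGrammar.Produces.trans_derives
      (⟨⟨some ((c, []), Sum.inr (), q''),
        [Symbol.terminal a, Symbol.nonterminal (some ((δ c a, out c a), Sum.inr (), q''))]⟩,
        ?_, by simpa using ContextFreeRule.Rewrites.input_output⟩) ?_
    · refine (mem_bigGrammar_rules g δ out q₀).mpr (Or.inr (Or.inr (Or.inr ?_)))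
      refine List.mem_append.mpr (Or.inr ?_)
      refine List.mem_flatMap.mpr ⟨c, by simp, ?_⟩
      refine List.mem_flatMap.mpr ⟨a, by simp, ?_⟩
      exact List.mem_map.mpr ⟨q'', (mem_PL out).mpr hq', rfl⟩
    · simpa using (ih hw hq').append_left [Symbol.terminal a]
  | consume c d b hp ih => intro hw; simp at hw

lemma derives_T {p p' : Conf Δ Q} {d : Δ} {u : List α} (h : NPath δ out p [d] u p')
    (hp : Good (out := out) p) :
    (bigGrammar g δ out q₀).Derives
      [Symbol.nonterminal (some (p, Sum.inl (Symbol.terminal d), p'))]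
      (u.map Symbol.terminal) := by
  obtain ⟨c, b, u₁, u₂, rfl, h₁, h₂⟩ := h.cons_inv
  obtain ⟨rfl, rfl⟩ := h₂.nil_inv
  have hgood : Good (out := out) (c, d :: b) := h₁.good hp
  refine ContextFreeGrammar.Produces.trans_derives
    (⟨⟨some (p, Sum.inl (Symbol.terminal d), (c, b)),
      [Symbol.nonterminal (some (p, Sum.inr (), (c, d :: b)))]⟩,
      ?_, by simpa using ContextFreeRule.Rewrites.input_output⟩) ?_
  · refine (mem_bigGrammar_rules g δ out q₀).mpr (Or.inr (Or.inr (Or.inl ?_)))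
    refine List.mem_flatMap.mpr ⟨p, (mem_PL out).mpr hp, ?_⟩
    refine List.mem_flatMap.mpr ⟨(c, d :: b), (mem_PL out).mpr hgood, ?_⟩
    simp [mkT]
    exact List.mem_singleton_self _
  · simpa using derives_E h₁ hgood

/-- The workhorse for completeness: `LiftGen p w u p'` means that the sentential form `w`
of `g` can be lifted to a chain of triples from `p` to `p'` whose pieces generate the
pieces of a decomposition of `u` in the simulating grammar. -/
inductive LiftGen : Conf Δ Q → List (Symbol Δ g.NT) → List α → Conf Δ Q → Prop
  | nil (p : Conf Δ Q) (hp : Good (out := out) p) : LiftGen p [] [] p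
  | cons (p q p' : Conf Δ Q) (s : Symbol Δ g.NT) (w : List (Symbol Δ g.NT)) (u₁ u₂ : List α)
      (hp : Good (out := out) p) (hq : Good (out := out) q)
      (hd : (bigGrammar g δ out q₀).Derives
        [Symbol.nonterminal (some (p, Sum.inl s, q))] (u₁.map Symbol.terminal))
      (h : LiftGen q w u₂ p') : LiftGen p (s :: w) (u₁ ++ u₂) p'

lemma LiftGen.good_left {p p' : Conf Δ Q} {w : List (Symbol Δ g.NT)} {u : List α}
    (h : LiftGen (δ := δ) (out := out) (q₀ := q₀) p w u p') : Good (out := out) p := by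
  cases h with
  | nil _ hp => exact hp
  | cons _ _ _ _ _ _ _ hp => exact hp

lemma LiftGen.good_right {p p' : Conf Δ Q} {w : List (Symbol Δ g.NT)} {u : List α}
    (h : LiftGen (δ := δ) (out := out) (q₀ := q₀) p w u p') : Good (out := out) p' := by
  induction h with
  | nil _ hp => exact hp
  | cons _ _ _ _ _ _ _ _ _ _ _ ih => exact ih

lemma LiftGen.append {p q p' : Conf Δ Q} {w₁ w₂ : List (Symbol Δ g.NT)} {u₁ u₂ : List α}
    (h₁ : LiftGen (δ := δ) (out := out) (q₀ := q₀) p w₁ u₁ q) (h₂ : LiftGen (δ := δ) (out := out) (q₀ := q₀) q w₂ u₂ p') :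
    LiftGen (δ := δ) (out := out) (q₀ := q₀) p (w₁ ++ w₂) (u₁ ++ u₂) p' := by
  induction h₁ with
  | nil => simpa using h₂
  | cons p r p'' s w v₁ v₂ hp hr hd h ih =>
    rw [List.append_assoc]
    exact LiftGen.cons p r p' s (w ++ w₂) v₁ (v₂ ++ u₂) hp hr hd (ih h₂)

lemma LiftGen.split {p p' : Conf Δ Q} {w₁ w₂ : List (Symbol Δ g.NT)} {u : List α}
    (h : LiftGen (δ := δ) (out := out) (q₀ := q₀) p (w₁ ++ w₂) u p') :
    ∃ q u₁ u₂, u = u₁ ++ u₂ ∧ LiftGen (δ := δ) (out := out) (q₀ := q₀) p w₁ u₁ q ∧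
      LiftGen (δ := δ) (out := out) (q₀ := q₀) q w₂ u₂ p' := by
  induction w₁ generalizing p u with
  | nil => exact ⟨p, [], u, rfl, LiftGen.nil p h.good_left, h⟩
  | cons s w₁ ih =>
    cases h with
    | cons _ q _ _ _ u₁ u₂ hp hq hd h =>
      obtain ⟨q', v₁, v₂, rfl, hl₁, hl₂⟩ := ih h
      exact ⟨q', u₁ ++ v₁, v₂, by simp, LiftGen.cons p q q' s w₁ u₁ v₁ hp hq hd hl₁, hl₂⟩

lemma LiftGen.derives_zipLift {q q' : Conf Δ Q} {β : List (Symbol Δ g.NT)} {u : List α}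
    (h : LiftGen (δ := δ) (out := out) (q₀ := q₀) q β u q') :
    ∃ rs, rs ∈ seqs (α := α) out β.length ∧ lastP q rs = q' ∧
      (bigGrammar g δ out q₀).Derives (zipLift (Q := Q) g q β rs) (u.map Symbol.terminal) := by
  induction h with
  | nil p hp => exact ⟨[], by simp, rfl, by exact ContextFreeGrammar.Derives.refl []⟩
  | cons p r p'' s w u₁ u₂ hp hr hd h ih =>
    obtain ⟨rs, hrs, hlast, hder⟩ := ih
    refine ⟨r :: rs, ?_, by simpa using hlast, ?_⟩
    · rw [show (s :: w : List (Symbol Δ g.NT)).length = w.length + 1 from rfl, seqs_succ]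
      exact List.mem_flatMap.mpr ⟨r, (mem_PL out).mpr hr, List.mem_map.mpr ⟨rs, hrs, rfl⟩⟩
    · rw [show zipLift (Q := Q) g p (s :: w) (r :: rs) =
        Symbol.nonterminal (some (p, Sum.inl s, r)) :: zipLift (Q := Q) g r w rs from rfl]
      have step1 := hd.append_right (zipLift (Q := Q) g r w rs)
      have step2 := hder.append_left (u₁.map Symbol.terminal)
      rw [List.map_append]
      exact step1.trans step2

lemma liftGen_of_rule {q q' : Conf Δ Q} {r₀ : ContextFreeRule Δ g.NT} (hr₀ : r₀ ∈ g.rules)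
    {u : List α} (h : LiftGen (δ := δ) (out := out) (q₀ := q₀) q r₀.output u q') :
    (bigGrammar g δ out q₀).Derives
      [Symbol.nonterminal (some (q, Sum.inl (Symbol.nonterminal r₀.input), q'))]
      (u.map Symbol.terminal) := by
  obtain ⟨rs, hrs, rfl, hder⟩ := h.derives_zipLift
  refine ContextFreeGrammar.Produces.trans_derives
    (⟨⟨some (q, Sum.inl (Symbol.nonterminal r₀.input), lastP q rs),
      zipLift (Q := Q) g q r₀.output rs⟩,
      ?_, by simpa using ContextFreeRule.Rewrites.input_output⟩) hder
  refine (mem_bigGrammar_rules g δ out q₀).mpr (Or.inr (Or.inl ?_))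
  refine List.mem_flatMap.mpr ⟨r₀, Finset.mem_toList.mpr hr₀, ?_⟩
  refine List.mem_flatMap.mpr ⟨q, (mem_PL out).mpr h.good_left, ?_⟩
  exact List.mem_map.mpr ⟨rs, hrs, rfl⟩

lemma liftGen_of_terminal {p p' : Conf Δ Q} {v : List Δ} {u : List α}
    (h : NPath δ out p v u p') (hp : Good (out := out) p) :
    LiftGen (δ := δ) (out := out) (q₀ := q₀) (g := g) p (v.map Symbol.terminal) u p' := by
  induction v generalizing p u with
  | nil =>
    obtain ⟨rfl, rfl⟩ := h.nil_inv
    exact LiftGen.nil _ hp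
  | cons d v ih =>
    obtain ⟨q, u₁, u₂, rfl, h₁, h₂⟩ := NPath.split (v₁ := [d]) (v₂ := v) h
    have hq : Good (out := out) q := h₁.good hp
    exact LiftGen.cons p q p' (Symbol.terminal d) (v.map Symbol.terminal) u₁ u₂ hp hq
      (derives_T h₁ hp) (ih h₂ hq)

lemma liftGen_of_derives {w : List (Symbol Δ g.NT)} {v : List Δ}
    (hd : g.Derives w (v.map Symbol.terminal)) {p p' : Conf Δ Q} {u : List α}
    (h : NPath δ out p v u p') (hp : Good (out := out) p) :
    LiftGen (δ := δ) (out := out) (q₀ := q₀) p w u p' := by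
  induction hd using Relation.ReflTransGen.head_induction_on with
  | refl => exact liftGen_of_terminal h hp
  | head hstep hrest ih =>
    obtain ⟨r₀, hr₀, hrw⟩ := hstep
    obtain ⟨x, y, rfl, rfl⟩ := hrw.exists_parts
    rw [List.append_assoc] at ih
    obtain ⟨q₁, u₁, u₂₃, rfl, hx, hrest'⟩ := ih.split
    obtain ⟨q₂, u₂, u₃, rfl, hmid, hy⟩ := hrest'.split
    have hder := liftGen_of_rule hr₀ hmid
    have hmid' : LiftGen (δ := δ) (out := out) (q₀ := q₀) q₁ [Symbol.nonterminal r₀.input] u₂ q₂ := by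
      have := LiftGen.cons q₁ q₂ q₂ (Symbol.nonterminal r₀.input) [] u₂ []
        hmid.good_left hmid.good_right hder (LiftGen.nil q₂ hmid.good_right)
      simpa using this
    have := hx.append (hmid'.append hy)
    simpa using this

lemma bigGrammar_complete {v : List Δ} {u : List α} (hv : v ∈ g.language)
    (hp : TPath δ out (iniC q₀) v u (iniC q₀)) :
    u ∈ (bigGrammar g δ out q₀).language := by
  obtain ⟨q, u₁, u₂, rfl, h₁, h₂⟩ := hp.split_last
  have hq : Good (out := out) q := h₁.good (good_nil _)
  have hlift : LiftGen (δ := δ) (out := out) (q₀ := q₀) (iniC q₀)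
      [Symbol.nonterminal g.initial] u₁ q :=
    liftGen_of_derives ((g.mem_language_iff v).mp hv) h₁ (good_nil _)
  rw [ContextFreeGrammar.mem_language_iff]
  cases hlift with
  | cons _ q' _ _ _ w₁ w₂ hp' hq' hd h =>
    obtain ⟨rfl, hq2⟩ : w₂ = [] ∧ q' = q := by
      cases h with | nil => exact ⟨rfl, rfl⟩
    rw [hq2] at hd
    refine ContextFreeGrammar.Produces.trans_derives
      (⟨⟨none, [Symbol.nonterminal (some (iniC q₀, Sum.inl (Symbol.nonterminal g.initial), q)),
          Symbol.nonterminal (some (q, Sum.inr (), iniC q₀))]⟩,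
        ?_, by exact ContextFreeRule.Rewrites.input_output⟩) ?_
    · refine (mem_bigGrammar_rules g δ out q₀).mpr (Or.inl ?_)
      exact List.mem_map.mpr ⟨q, (mem_PL out).mpr hq, rfl⟩
    · have step1 := hd.append_right [Symbol.nonterminal (some (q, Sum.inr (), iniC q₀))]
      have step2 := (derives_E (q₀ := q₀) (g := g) h₂ (good_nil _)).append_left
        (w₁.map Symbol.terminal)
      simpa using step1.trans step2

/-- The language of the simulating grammar. -/
theorem bigGrammar_language :
    (bigGrammar g δ out q₀).language =
      {u : List α | runFrom δ q₀ u = q₀ ∧ outFrom δ out q₀ u ∈ g.language} := by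
  ext u
  constructor
  · intro h
    obtain ⟨v, hv, hp⟩ := bigGrammar_sound h
    obtain ⟨ho, hr⟩ := tPath_iff_run.mp hp
    exact ⟨hr, ho ▸ hv⟩
  · rintro ⟨hr, ho⟩
    exact bigGrammar_complete ho (tPath_iff_run.mpr ⟨rfl, hr⟩)

end grammar

/-- Main abstract theorem: the preimage of a context-free language under a total
deterministic finite-state transduction (with acceptance by state) is context-free. -/
theorem isContextFree_transduced {α Δ Q : Type} [Fintype α] [Fintype Q]
    (δ : Q → α → Q) (out : Q → α → List Δ) (q₀ : Q) {L : Language Δ}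
    (hL : L.IsContextFree) :
    Language.IsContextFree {u : List α | runFrom δ q₀ u = q₀ ∧ outFrom δ out q₀ u ∈ L} := by
  obtain ⟨g, rfl⟩ := hL
  exact ⟨bigGrammar g δ out q₀, bigGrammar_language (g := g) (δ := δ) (out := out) (q₀ := q₀)⟩

end CFWP

section group
open CFWP

variable {G : Type} [Group G]

private lemma coset_mem {H : Subgroup G} (s : G) (c : G ⧸ H) :
    (Quotient.out c)⁻¹ * s * Quotient.out (s⁻¹ • c) ∈ H := by
  have h1 : QuotientGroup.mk (s⁻¹ * Quotient.out c) = s⁻¹ • c := by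
    rw [← smul_eq_mul]
    exact MulAction.Quotient.mk_smul_out H s⁻¹ c
  have h2 : QuotientGroup.mk (Quotient.out (s⁻¹ • c)) = s⁻¹ • c := QuotientGroup.out_eq' _
  have := QuotientGroup.eq.mp (h1.trans h2.symm)
  simpa [mul_assoc] using this

/-- Theorem 6.4 (for context-free languages): the class of groups with context-free
word problem is closed under finite extensions.  If `H` is a subgroup of finite index
in `G` whose word problem is context-free, then the word problem of `G` is
context-free. -/
theorem wordProblem_contextFree_of_finiteIndex_subgroup
    {α Δ : Type} [Fintype α] [Fintype Δ] {G : Type} [Group G] (H : Subgroup G)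
    (hidx : H.FiniteIndex)
    (μ : FreeMonoid Δ →* H) (hμ : Function.Surjective μ)
    (hH : Language.IsContextFree {w : List Δ | μ (FreeMonoid.ofList w) = 1})
    (σ : FreeMonoid α →* G) (hσ : Function.Surjective σ) :
    Language.IsContextFree {w : List α | σ (FreeMonoid.ofList w) = 1} := by
  classical
  haveI : H.FiniteIndex := hidx
  haveI : Finite (G ⧸ H) := H.finite_quotient_of_finiteIndex
  haveI : Fintype (G ⧸ H) := Fintype.ofFinite _
  choose wf hwf using hμ
  set Q := G ⧸ H with hQ
  set δ : Q → α → Q := fun c a => (σ (FreeMonoid.of a))⁻¹ • c with hδ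
  set tH : Q → α → H := fun c a =>
    ⟨(Quotient.out c)⁻¹ * σ (FreeMonoid.of a) * Quotient.out (δ c a),
      coset_mem (σ (FreeMonoid.of a)) c⟩ with htH
  set out : Q → α → List Δ := fun c a => FreeMonoid.toList (wf (tH c a)) with hout
  set q₀ : Q := QuotientGroup.mk 1 with hq₀
  -- the transducer invariant
  have key : ∀ (u : List α) (c : Q),
      σ (FreeMonoid.ofList u) * Quotient.out (runFrom δ c u) =
        Quotient.out c * ((μ (FreeMonoid.ofList (outFrom δ out c u)) : H) : G) := by
    intro u
    induction u with
    | nil => intro c; simp [FreeMonoid.ofList_nil]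
    | cons a u ih =>
      intro c
      rw [runFrom_cons, outFrom_cons, FreeMonoid.ofList_cons, FreeMonoid.ofList_append,
        map_mul, map_mul]
      have h1 : μ (FreeMonoid.ofList (out c a)) = tH c a := by
        rw [hout]
        simp only [FreeMonoid.ofList_toList]
        exact hwf _
      rw [h1]
      have hih := ih (δ c a)
      rw [mul_assoc, hih]
      simp only [htH, MulMemClass.coe_mul]
      group
  -- word problem characterization via the transducer
  have main : ∀ u : List α, σ (FreeMonoid.ofList u) = 1 ↔
      runFrom δ q₀ u = q₀ ∧ μ (FreeMonoid.ofList (outFrom δ out q₀ u)) = 1 := by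
    intro u
    constructor
    · intro h
      have hk := key u q₀
      rw [h, one_mul] at hk
      have hrun : runFrom δ q₀ u = q₀ := by
        have := congrArg (QuotientGroup.mk (s := H)) hk
        rwa [QuotientGroup.out_eq', QuotientGroup.mk_mul_of_mem _ (SetLike.coe_mem _),
          QuotientGroup.out_eq'] at this
      refine ⟨hrun, ?_⟩
      rw [hrun] at hk
      have h2 : Quotient.out q₀ * (1 : G) =
          Quotient.out q₀ * ((μ (FreeMonoid.ofList (outFrom δ out q₀ u)) : H) : G) := by
        rw [mul_one]; exact hk
      have h3 := (mul_left_cancel h2).symm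
      exact (OneMemClass.coe_eq_one).mp h3
    · rintro ⟨hrun, hone⟩
      have hk := key u q₀
      rw [hrun, hone] at hk
      simpa using mul_right_cancel (b := Quotient.out q₀) (by simpa using hk)
  have := isContextFree_transduced δ out q₀ hH
  convert this using 1
  refine iff_of_eq (congrArg Language.IsContextFree ?_)
  refine Set.ext fun u => ?_
  exact main u

end group
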